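/- Let u⁻ be locally semiconcave and u⁺ locally semiconvex on an open set Ω ⊂ ℝⁿ, and set B = u⁻ - u⁺ (so B is locally semiconcave). If B attains a local minimum at x ∈ Ω, then both u⁻ and u⁺ are differentiable at x and Du⁻(x) = Du⁺(x). -/

import Mathlib

open RealInnerProductSpace
open Set

/-- The (Dini) superdifferential of `u` at `x`, relative to `Ω`. -/
def superdiffOn {n : ℕ} (u : EuclideanSpace ℝ (Fin n) → ℝ) (Ω : Set (EuclideanSpace ℝ (Fin n)))
    (x : EuclideanSpace ℝ (Fin n)) : Set (EuclideanSpace ℝ (Fin n)) :=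
  {p | ∀ ε > 0, ∃ δ > 0, ∀ y ∈ Ω, ‖y - x‖ < δ → u y - u x - ⟪p, y - x⟫ ≤ ε * ‖y - x‖}

/-- `v` is locally semiconcave (with linear modulus) on the open set `Ω`. -/
def LocallySemiconcaveOn {n : ℕ} (v : EuclideanSpace ℝ (Fin n) → ℝ)
    (Ω : Set (EuclideanSpace ℝ (Fin n))) : Prop :=
  ∀ z ∈ Ω, ∃ C : ℝ, ∃ δ > 0, Metric.ball z δ ⊆ Ω ∧
    ∀ x ∈ Metric.ball z δ, ∀ y ∈ Metric.ball z δ, ∀ lam ∈ Icc (0 : ℝ) 1,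
      lam * v x + (1 - lam) * v y - v (lam • x + (1 - lam) • y)
        ≤ C / 2 * lam * (1 - lam) * ‖x - y‖ ^ 2


lemma quad_id {n : ℕ} (u v : EuclideanSpace ℝ (Fin n)) (lam : ℝ) :
    ‖lam • u + (1 - lam) • v‖ ^ 2
      = lam * ‖u‖ ^ 2 + (1 - lam) * ‖v‖ ^ 2 - lam * (1 - lam) * ‖u - v‖ ^ 2 := by
  have h1 : ∀ w : EuclideanSpace ℝ (Fin n), ‖w‖ ^ 2 = ⟪w, w⟫ := fun w =>
    (real_inner_self_eq_norm_sq w).symm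
  rw [h1, h1, h1, h1]
  simp only [inner_add_left, inner_add_right, inner_sub_left, inner_sub_right,
    real_inner_smul_left, real_inner_smul_right, real_inner_comm u v]
  ring


lemma exists_subgradient {n : ℕ} (f : EuclideanSpace ℝ (Fin n) → ℝ)
    (x : EuclideanSpace ℝ (Fin n)) {δ : ℝ} (hδ : 0 < δ)
    (hf : ConvexOn ℝ (Metric.ball x δ) f) :
    ∃ p : EuclideanSpace ℝ (Fin n), ∀ y ∈ Metric.ball x δ, f x + ⟪p, y - x⟫ ≤ f y := by
  have hcont : ContinuousOn f (Metric.ball x δ) := hf.continuousOn Metric.isOpen_ball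
  set S : Set (EuclideanSpace ℝ (Fin n) × ℝ) :=
    {q | q.1 ∈ Metric.ball x δ ∧ f q.1 < q.2} with hS
  have hSconv : Convex ℝ S := by
    rintro ⟨y, s⟩ ⟨hy, hys⟩ ⟨z, t⟩ ⟨hz, hzt⟩ a b ha hb hab
    refine ⟨(convex_ball x δ) hy hz ha hb hab, ?_⟩
    have h2 := hf.2 hy hz ha hb hab
    simp only [smul_eq_mul] at h2 ⊢
    rcases eq_or_lt_of_le ha with rfl | ha'
    · have hb1 : b = 1 := by linarith
      subst hb1
      simp only [zero_smul, zero_add, zero_mul, one_smul, one_mul] at h2 ⊢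
      exact lt_of_le_of_lt h2 hzt
    · have hlt : a * f y + b * f z < a * s + b * t := by
        have h1 : a * f y < a * s := (mul_lt_mul_iff_right₀ ha').mpr hys
        have h2' : b * f z ≤ b * t := mul_le_mul_of_nonneg_left hzt.le hb
        linarith
      exact lt_of_le_of_lt h2 hlt
  have hSopen : IsOpen S := by
    rw [isOpen_iff_mem_nhds]
    rintro ⟨y, t⟩ ⟨hy, hyt⟩
    have hfy : ContinuousAt f y := hcont.continuousAt (Metric.isOpen_ball.mem_nhds hy)
    have hc : ContinuousAt (fun q : EuclideanSpace ℝ (Fin n) × ℝ => f q.1 - q.2) (y, t) :=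
      (hfy.comp continuousAt_fst).sub continuousAt_snd
    have h1 : ∀ᶠ q : EuclideanSpace ℝ (Fin n) × ℝ in nhds (y, t), f q.1 - q.2 < 0 := by
      have : Filter.Tendsto (fun q : EuclideanSpace ℝ (Fin n) × ℝ => f q.1 - q.2)
          (nhds (y, t)) (nhds (f y - t)) := hc
      exact this.eventually_lt_const (by linarith)
    have h2 : ∀ᶠ q : EuclideanSpace ℝ (Fin n) × ℝ in nhds (y, t), q.1 ∈ Metric.ball x δ :=
      continuousAt_fst.eventually_mem (Metric.isOpen_ball.mem_nhds hy)
    filter_upwards [h1, h2] with q hq1 hq2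
    exact ⟨hq2, by linarith⟩
  have hxS : (x, f x) ∉ S := fun h => lt_irrefl _ h.2
  obtain ⟨L, hL⟩ := geometric_hahn_banach_open_point hSconv hSopen hxS
  -- decompose L
  set g : EuclideanSpace ℝ (Fin n) → ℝ := fun y => L (y, 0) with hg
  set c : ℝ := L (0, 1) with hc
  have hdec : ∀ (y : EuclideanSpace ℝ (Fin n)) (t : ℝ), L (y, t) = g y + t * c := by
    intro y t
    have : (y, t) = (y, (0:ℝ)) + t • ((0 : EuclideanSpace ℝ (Fin n)), (1:ℝ)) := by
      simp [Prod.ext_iff]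
    rw [this, map_add, map_smul]
    simp [hg, hc, smul_eq_mul]
  -- c < 0
  have hcneg : c < 0 := by
    have := hL (x, f x + 1) ⟨Metric.mem_ball_self hδ, by show f x < f x + 1; linarith⟩
    rw [hdec, hdec] at this
    linarith
  -- key inequality
  have hkey : ∀ y ∈ Metric.ball x δ, g y + f y * c ≤ g x + f x * c := by
    intro y hy
    by_contra hcon
    push_neg at hcon
    set d : ℝ := (g y + f y * c) - (g x + f x * c) with hd
    have hdpos : 0 < d := by linarith
    have hε : 0 < d / (-2 * c) := div_pos hdpos (by linarith)
    have := hL (y, f y + d / (-2 * c)) ⟨hy, by show f y < f y + d / (-2 * c); linarith⟩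
    rw [hdec, hdec] at this
    have hcc : (f y + d / (-2 * c)) * c = f y * c + (d / (-2*c)) * c := by ring
    rw [hcc] at this
    have : d + (d / (-2*c)) * c < 0 := by linarith
    have he : (d / (-2*c)) * c = -d/2 := by
      rw [div_mul_eq_mul_div, div_eq_div_iff (by linarith) (by norm_num)]
      ring
    rw [he] at this
    linarith
  -- convert to inner product
  set v : EuclideanSpace ℝ (Fin n) :=
    (InnerProductSpace.toDual ℝ (EuclideanSpace ℝ (Fin n))).symm
      (L.comp (ContinuousLinearMap.inl ℝ (EuclideanSpace ℝ (Fin n)) ℝ)) with hv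
  have hvg : ∀ y, ⟪v, y⟫ = g y := by
    intro y
    rw [hv, InnerProductSpace.toDual_symm_apply]
    simp [hg]
  refine ⟨(-c)⁻¹ • v, fun y hy => ?_⟩
  have h1 := hkey y hy
  rw [← hvg y, ← hvg x] at h1
  have h2 : ⟪v, y - x⟫ = ⟪v, y⟫ - ⟪v, x⟫ := inner_sub_right v y x
  rw [real_inner_smul_left, h2]
  have hcpos : 0 < -c := by linarith
  have h3 : ⟪v, y⟫ - ⟪v, x⟫ ≤ (-c) * (f y - f x) := by nlinarith
  have h5 : (-c)⁻¹ * (⟪v, y⟫ - ⟪v, x⟫) ≤ f y - f x := by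
    calc (-c)⁻¹ * (⟪v, y⟫ - ⟪v, x⟫) ≤ (-c)⁻¹ * ((-c) * (f y - f x)) :=
          mul_le_mul_of_nonneg_left h3 (inv_nonneg.mpr hcpos.le)
      _ = f y - f x := by field_simp [ne_of_lt hcneg]
  linarith

lemma hasGradientAt_of_quadratic_sandwich {n : ℕ} {u : EuclideanSpace ℝ (Fin n) → ℝ}
    {p x : EuclideanSpace ℝ (Fin n)} {C δ : ℝ} (hC : 0 < C) (hδ : 0 < δ)
    (h : ∀ y ∈ Metric.ball x δ, |u y - u x - ⟪p, y - x⟫| ≤ C / 2 * ‖y - x‖ ^ 2) :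
    HasGradientAt u p x := by
  rw [hasGradientAt_iff_isLittleO, Asymptotics.isLittleO_iff]
  intro c hc
  have hδ' : 0 < min δ (2 * c / C) := lt_min hδ (by positivity)
  filter_upwards [Metric.ball_mem_nhds x hδ'] with y hy
  have hd : ‖y - x‖ < min δ (2 * c / C) := by
    rw [← dist_eq_norm]; exact hy
  have h1 : ‖y - x‖ < δ := lt_of_lt_of_le hd (min_le_left _ _)
  have h2 : ‖y - x‖ < 2 * c / C := lt_of_lt_of_le hd (min_le_right _ _)
  have h3 := h y (by rw [Metric.mem_ball, dist_eq_norm]; exact h1)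
  have h4 : (0:ℝ) ≤ ‖y - x‖ := norm_nonneg _
  have h2' : ‖y - x‖ * C < 2 * c := (lt_div_iff₀ hC).mp h2
  have h5 : C / 2 * ‖y - x‖ ^ 2 ≤ c * ‖y - x‖ := by
    nlinarith [mul_le_mul_of_nonneg_right h2'.le h4]
  simp only [Real.norm_eq_abs]
  linarith [h3]

lemma convexOn_of_semiconcave_ball {n : ℕ} (v : EuclideanSpace ℝ (Fin n) → ℝ)
    (x : EuclideanSpace ℝ (Fin n)) {C δ : ℝ}
    (hsc : ∀ a ∈ Metric.ball x δ, ∀ b ∈ Metric.ball x δ, ∀ lam ∈ Icc (0:ℝ) 1,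
      lam * v a + (1 - lam) * v b - v (lam • a + (1 - lam) • b)
        ≤ C / 2 * lam * (1 - lam) * ‖a - b‖ ^ 2) :
    ConvexOn ℝ (Metric.ball x δ) (fun y => C / 2 * ‖y - x‖ ^ 2 - v y) := by
  refine ⟨convex_ball x δ, ?_⟩
  intro a ha b hb la lb hla hlb hab
  have hlb' : lb = 1 - la := by linarith
  subst hlb'
  have hkey := hsc a ha b hb la ⟨hla, by linarith⟩
  have hco : la • a + (1 - la) • b - x = la • (a - x) + (1 - la) • (b - x) := by
    module
  have hq := quad_id (a - x) (b - x) la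
  rw [show a - x - (b - x) = a - b from by abel] at hq
  simp only [smul_eq_mul]
  rw [hco, hq]
  nlinarith [hkey]

/-- If `B = u⁻ - u⁺` (`u⁻` locally semiconcave, `u⁺` locally semiconvex) attains a local
minimum at `x ∈ Ω`, then both `u⁻` and `u⁺` are differentiable at `x` with the same
gradient. -/
theorem barrier_local_min_differentiable {n : ℕ}
    (Ω : Set (EuclideanSpace ℝ (Fin n))) (hΩo : IsOpen Ω)
    (uminus uplus : EuclideanSpace ℝ (Fin n) → ℝ)
    (hconc : LocallySemiconcaveOn uminus Ω)
    (hconv : LocallySemiconcaveOn (fun x => -uplus x) Ω)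
    (B : EuclideanSpace ℝ (Fin n) → ℝ) (hB : ∀ x, B x = uminus x - uplus x)
    (x : EuclideanSpace ℝ (Fin n)) (hx : x ∈ Ω)
    (hmin : IsLocalMin B x) :
    ∃ p : EuclideanSpace ℝ (Fin n), HasGradientAt uminus p x ∧ HasGradientAt uplus p x := by
  obtain ⟨C₁, δ₁, hδ₁, hsub₁, hsc₁⟩ := hconc x hx
  obtain ⟨C₂, δ₂, hδ₂, hsub₂, hsc₂⟩ := hconv x hx
  obtain ⟨δ₀, hδ₀, hmin'⟩ := Metric.eventually_nhds_iff_ball.mp hmin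
  set C : ℝ := max (max C₁ C₂) 1 with hCdef
  have hC1 : C₁ ≤ C := le_trans (le_max_left _ _) (le_max_left _ _)
  have hC2 : C₂ ≤ C := le_trans (le_max_right _ _) (le_max_left _ _)
  have hCpos : (0:ℝ) < C := lt_of_lt_of_le one_pos (le_max_right _ _)
  set δ : ℝ := min (min δ₁ δ₂) δ₀ with hδdef
  have hδpos : 0 < δ := lt_min (lt_min hδ₁ hδ₂) hδ₀
  have hb₁ : Metric.ball x δ ⊆ Metric.ball x δ₁ :=
    Metric.ball_subset_ball (le_trans (min_le_left _ _) (min_le_left _ _))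
  have hb₂ : Metric.ball x δ ⊆ Metric.ball x δ₂ :=
    Metric.ball_subset_ball (le_trans (min_le_left _ _) (min_le_right _ _))
  have hb₀ : Metric.ball x δ ⊆ Metric.ball x δ₀ :=
    Metric.ball_subset_ball (min_le_right _ _)
  -- convexity of the two regularized functions
  have hg₁ : ConvexOn ℝ (Metric.ball x δ) (fun y => C / 2 * ‖y - x‖ ^ 2 - uminus y) := by
    apply convexOn_of_semiconcave_ball
    intro a ha b hb lam hlam
    have h := hsc₁ a (hb₁ ha) b (hb₁ hb) lam hlam
    have hnn : 0 ≤ lam * (1 - lam) * ‖a - b‖ ^ 2 :=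
      mul_nonneg (mul_nonneg hlam.1 (by linarith [hlam.2])) (sq_nonneg _)
    nlinarith
  have hg₂ : ConvexOn ℝ (Metric.ball x δ)
      (fun y => C / 2 * ‖y - x‖ ^ 2 - (fun z => -uplus z) y) := by
    apply convexOn_of_semiconcave_ball
    intro a ha b hb lam hlam
    have h := hsc₂ a (hb₂ ha) b (hb₂ hb) lam hlam
    have hnn : 0 ≤ lam * (1 - lam) * ‖a - b‖ ^ 2 :=
      mul_nonneg (mul_nonneg hlam.1 (by linarith [hlam.2])) (sq_nonneg _)
    simp only at h ⊢
    nlinarith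
  obtain ⟨p₁, hp₁⟩ := exists_subgradient _ x hδpos hg₁
  obtain ⟨p₂, hp₂⟩ := exists_subgradient _ x hδpos hg₂
  simp only [sub_self, norm_zero] at hp₁ hp₂
  -- basic inequalities on the ball
  have hA : ∀ y ∈ Metric.ball x δ,
      uminus y - uminus x - ⟪-p₁, y - x⟫ ≤ C / 2 * ‖y - x‖ ^ 2 := by
    intro y hy
    rw [inner_neg_left]
    linarith [hp₁ y hy]
  have hB' : ∀ y ∈ Metric.ball x δ,
      uplus x + ⟪p₂, y - x⟫ - C / 2 * ‖y - x‖ ^ 2 ≤ uplus y := by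
    intro y hy
    linarith [hp₂ y hy]
  have hBmin : ∀ y ∈ Metric.ball x δ, B x ≤ B y := fun y hy => hmin' y (hb₀ hy)
  have hup : ∀ y ∈ Metric.ball x δ,
      uplus y ≤ uplus x + ⟪-p₁, y - x⟫ + C / 2 * ‖y - x‖ ^ 2 := by
    intro y hy
    have h1 := hBmin y hy
    rw [hB y, hB x] at h1
    have h2 := hA y hy
    linarith
  -- the two subgradients agree
  have hpp : p₂ = -p₁ := by
    by_contra hne
    set w : EuclideanSpace ℝ (Fin n) := p₂ - (-p₁) with hwdef
    have hwne : w ≠ 0 := sub_ne_zero.mpr hne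
    have hnw : 0 < ‖w‖ := norm_pos_iff.mpr hwne
    set t : ℝ := min (δ / (2 * ‖w‖)) (1 / (2 * C)) with htdef
    have ht : 0 < t := lt_min (by positivity) (by positivity)
    have ht1 : t ≤ δ / (2 * ‖w‖) := min_le_left _ _
    have ht2 : t ≤ 1 / (2 * C) := min_le_right _ _
    set y : EuclideanSpace ℝ (Fin n) := x + t • w with hydef
    have hyx : y - x = t • w := by rw [hydef]; abel
    have hny : ‖y - x‖ = t * ‖w‖ := by
      rw [hyx, norm_smul, Real.norm_eq_abs, abs_of_pos ht]
    have hyball : y ∈ Metric.ball x δ := by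
      rw [Metric.mem_ball, dist_eq_norm, hny]
      calc t * ‖w‖ ≤ δ / (2 * ‖w‖) * ‖w‖ := mul_le_mul_of_nonneg_right ht1 hnw.le
        _ = δ / 2 := by field_simp
        _ < δ := by linarith
    have h1 := hB' y hyball
    have h2 := hup y hyball
    have h3 : ⟪w, y - x⟫ ≤ C * ‖y - x‖ ^ 2 := by
      rw [hwdef, inner_sub_left]
      linarith
    have h4 : ⟪w, y - x⟫ = t * ‖w‖ ^ 2 := by
      rw [hyx, real_inner_smul_right, real_inner_self_eq_norm_sq]
    rw [h4, hny] at h3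
    have hCt : C * t ≤ 1 / 2 := by
      calc C * t ≤ C * (1 / (2 * C)) := mul_le_mul_of_nonneg_left ht2 hCpos.le
        _ = 1 / 2 := by field_simp
    nlinarith [mul_pos ht (mul_pos hnw hnw), hCt, ht, hnw, sq_nonneg ‖w‖]
  refine ⟨-p₁, ?_, ?_⟩
  · apply hasGradientAt_of_quadratic_sandwich hCpos hδpos
    intro y hy
    rw [abs_le]
    constructor
    · have h1 := hB' y hy
      rw [hpp] at h1
      have h2 := hBmin y hy
      rw [hB y, hB x] at h2
      linarith
    · linarith [hA y hy]
  · apply hasGradientAt_of_quadratic_sandwich hCpos hδpos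
    intro y hy
    rw [abs_le]
    constructor
    · have h1 := hB' y hy
      rw [hpp] at h1
      linarith
    · have h2 := hup y hy
      linarith
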